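/- arXiv:2404.06888 — 5 statements merged into one kernel-verified Lean document; each statement's English description precedes it below -/
import Mathlib

section
/- For all positive integers n and m, the product lcm{1,...,n} · lcm{1,...,m} divides lcm{1,...,n·m}. -/
lemma lcm_icc_ne_zero (n : ℕ) : (Finset.Icc 1 n).lcm id ≠ 0 := by
  rw [Ne, Finset.lcm_eq_zero_iff]
  rintro ⟨i, hi, rfl⟩
  simp only [Finset.coe_Icc, Set.mem_Icc, Finset.mem_Icc] at hi
  omega

lemma pow_dvd_lcm_exists {p k : ℕ} (pp : p.Prime) (s : Finset ℕ) (h0 : 0 ∉ s)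
    (h : p ^ k ∣ s.lcm id) : k = 0 ∨ ∃ i ∈ s, p ^ k ∣ i := by
  classical
  induction s using Finset.induction_on with
  | empty =>
    left
    rw [Finset.lcm_empty, Nat.dvd_one] at h
    by_contra hk
    exact absurd h (Nat.one_lt_pow hk pp.one_lt).ne'
  | @insert a s ha ih =>
    have ha0 : a ≠ 0 := fun h' => h0 (h' ▸ Finset.mem_insert_self a s)
    have hs0 : 0 ∉ s := fun h' => h0 (Finset.mem_insert_of_mem h')
    have hL : s.lcm id ≠ 0 := by
      rw [Ne, Finset.lcm_eq_zero_iff]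
      rintro ⟨i, hi, rfl⟩
      exact hs0 hi
    rw [Finset.lcm_insert] at h
    have hlcm : Nat.lcm a (s.lcm id) ≠ 0 := Nat.lcm_ne_zero ha0 hL
    have hk : k ≤ (Nat.lcm a (s.lcm id)).factorization p :=
      (pp.pow_dvd_iff_le_factorization hlcm).mp h
    rw [Nat.factorization_lcm ha0 hL, Finsupp.sup_apply, le_sup_iff] at hk
    rcases hk with hk | hk
    · exact Or.inr ⟨a, Finset.mem_insert_self a s,
        (pp.pow_dvd_iff_le_factorization ha0).mpr hk⟩
    · rcases ih hs0 ((pp.pow_dvd_iff_le_factorization hL).mpr hk) with h | ⟨i, hi, hd⟩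
      · exact Or.inl h
      · exact Or.inr ⟨i, Finset.mem_insert_of_mem hi, hd⟩

lemma pow_dvd_lcm_icc {p k n : ℕ} (pp : p.Prime) (hn : 0 < n) :
    p ^ k ∣ (Finset.Icc 1 n).lcm id ↔ p ^ k ≤ n := by
  constructor
  · intro h
    rcases pow_dvd_lcm_exists pp _ (by simp) h with rfl | ⟨i, hi, hd⟩
    · simpa using Nat.succ_le_of_lt hn
    · rw [Finset.mem_Icc] at hi
      exact le_trans (Nat.le_of_dvd (by omega) hd) hi.2
  · intro h
    exact Finset.dvd_lcm (Finset.mem_Icc.mpr ⟨Nat.one_le_iff_ne_zero.mpr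
      (pow_ne_zero _ pp.pos.ne'), h⟩)

theorem lcm_mul_dvd_lcm (n m : ℕ) (hn : 0 < n) (hm : 0 < m) :
    (Finset.Icc 1 n).lcm id * (Finset.Icc 1 m).lcm id ∣ (Finset.Icc 1 (n * m)).lcm id := by
  have hA := lcm_icc_ne_zero n
  have hB := lcm_icc_ne_zero m
  have hC := lcm_icc_ne_zero (n * m)
  rw [← Nat.factorization_le_iff_dvd (mul_ne_zero hA hB) hC, Nat.factorization_mul hA hB,
    Finsupp.le_def]
  intro p
  rcases em p.Prime with pp | pp
  · set a := ((Finset.Icc 1 n).lcm id).factorization p with hadef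
    set b := ((Finset.Icc 1 m).lcm id).factorization p with hbdef
    simp only [Finsupp.add_apply]
    rw [← pp.pow_dvd_iff_le_factorization hC]
    have h1 : p ^ a ≤ n := (pow_dvd_lcm_icc pp hn).mp (Nat.ordProj_dvd _ p)
    have h2 : p ^ b ≤ m := (pow_dvd_lcm_icc pp hm).mp (Nat.ordProj_dvd _ p)
    refine (pow_dvd_lcm_icc pp (Nat.mul_pos hn hm)).mpr ?_
    rw [pow_add]
    exact Nat.mul_le_mul h1 h2
  · simp [Nat.factorization_eq_zero_of_not_prime _ pp]
end

section
/- For every integer n ≥ 9, lcm{1, 2, ..., n} > 2^n. -/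
open Nat Finset

lemma lcm_Icc_ne_zero (m : ℕ) : (Finset.Icc 1 m).lcm id ≠ 0 := by
  intro h
  rw [Finset.lcm_eq_zero_iff] at h
  simp only [Set.mem_image, Finset.mem_coe, Finset.mem_Icc, id] at h
  obtain ⟨x, ⟨hx, _⟩, hx0⟩ := h
  omega

/-- Nair's key divisibility: `k * C(m, k) ∣ lcm {1, ..., m}`. -/
lemma mul_choose_dvd_lcm {m k : ℕ} (hk : 1 ≤ k) (hkm : k ≤ m) :
    k * m.choose k ∣ (Finset.Icc 1 m).lcm id := by
  have hm : 1 ≤ m := hk.trans hkm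
  have hc : 0 < m.choose k := Nat.choose_pos hkm
  rw [← Nat.factorization_le_iff_dvd (by positivity) (lcm_Icc_ne_zero m)]
  intro p
  by_cases hp : p.Prime
  · haveI : Fact p.Prime := ⟨hp⟩
    by_cases hpm : p ≤ m
    · -- main case
      have hL : Nat.log p m ≤ ((Finset.Icc 1 m).lcm id).factorization p := by
        rw [← Nat.Prime.pow_dvd_iff_le_factorization hp (lcm_Icc_ne_zero m)]
        refine dvd_trans ?_ (Finset.dvd_lcm (b := p ^ Nat.log p m) ?_)
        · exact dvd_refl _
        · rw [Finset.mem_Icc]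
          exact ⟨Nat.one_le_pow _ _ hp.pos, Nat.pow_log_le_self p (by omega)⟩
      refine le_trans ?_ hL
      rw [Nat.factorization_mul (by omega) hc.ne']
      set a := k.factorization p with ha
      have hpa : p ^ a ∣ k := Nat.ordProj_dvd k p
      have haL : a ≤ Nat.log p m := by
        rw [Nat.le_log_iff_pow_le hp.one_lt (by omega)]
        exact le_trans (Nat.le_of_dvd (by omega) hpa) hkm
      have hchoose : (m.choose k).factorization p ≤ Nat.log p m - a := by
        rw [Nat.factorization_def _ hp, padicValNat_choose hkm (lt_succ_self _)]
        refine le_trans (Finset.card_le_card (t := Finset.Ico (a+1) (Nat.log p m + 1)) ?_) ?_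
        · intro i hi
          simp only [Finset.mem_filter, Finset.mem_Ico] at hi ⊢
          obtain ⟨⟨hi1, hi2⟩, hcarry⟩ := hi
          refine ⟨?_, hi2⟩
          by_contra hia
          push_neg at hia
          have : p ^ i ∣ k := dvd_trans (pow_dvd_pow p (by omega)) hpa
          rw [Nat.mod_eq_zero_of_dvd this] at hcarry
          have hlt : (m - k) % p ^ i < p ^ i := Nat.mod_lt _ (pow_pos hp.pos i)
          omega
        · rw [Nat.card_Ico]; omega
      simp only [Finsupp.coe_add, Pi.add_apply]
      omega
    · -- p > m : left side has zero valuation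
      push_neg at hpm
      have h1 : k.factorization p = 0 :=
        Nat.factorization_eq_zero_of_not_dvd fun hd => by
          have := Nat.le_of_dvd (by omega) hd; omega
      have h2 : (m.choose k).factorization p = 0 :=
        Nat.factorization_choose_eq_zero_of_lt hpm
      rw [Nat.factorization_mul (by omega) hc.ne']
      simp [h1, h2]
  · simp [Nat.factorization_eq_zero_of_not_prime _ hp]

lemma nair_bound (m : ℕ) (hm : 4 ≤ m) :
    (2 * m + 1) * 4 ^ m < (Finset.Icc 1 (2 * m + 1)).lcm id := by
  set L := (Finset.Icc 1 (2 * m + 1)).lcm id with hL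
  set C := Nat.centralBinom m with hC
  have hCpos : 0 < C := Nat.centralBinom_pos m
  -- m * C divides lcm(1..2m) which divides L
  have h1 : m * C ∣ L := by
    refine dvd_trans ?_ (Finset.lcm_mono (Finset.Icc_subset_Icc le_rfl (by omega : 2 * m ≤ 2 * m + 1)))
    exact mul_choose_dvd_lcm (m := 2 * m) (k := m) (by omega) (by omega)
  -- (2m+1) * C = (m+1) * choose (2m+1) (m+1) divides L
  have h2 : (2 * m + 1) * C ∣ L := by
    have key : (m + 1) * (2 * m + 1).choose (m + 1) ∣ L :=
      mul_choose_dvd_lcm (m := 2 * m + 1) (k := m + 1) (by omega) (by omega)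
    have id1 : (2 * m + 1) * C = (m + 1) * (2 * m + 1).choose (m + 1) := by
      have h := Nat.add_one_mul_choose_eq (2 * m) m
      rw [hC, Nat.centralBinom]
      calc (2 * m + 1) * (2 * m).choose m = (2 * m).succ * (2 * m).choose m := rfl
        _ = (2 * m + 1).choose (m + 1) * (m + 1) := h
        _ = (m + 1) * (2 * m + 1).choose (m + 1) := mul_comm _ _
    rwa [id1]
  -- combine via lcm
  have hcop : Nat.Coprime m (2 * m + 1) := by
    simp [Nat.coprime_comm, Nat.coprime_mul_left_add_right 2 1 m]
  have h3 : m * (2 * m + 1) * C ∣ L := by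
    have hdvd : Nat.lcm (m * C) ((2 * m + 1) * C) ∣ L := Nat.lcm_dvd h1 h2
    rwa [Nat.lcm_mul_right, hcop.lcm_eq_mul] at hdvd
  have hLpos : 0 < L := Nat.pos_of_ne_zero (lcm_Icc_ne_zero _)
  have h4 : m * (2 * m + 1) * C ≤ L := Nat.le_of_dvd hLpos h3
  have h5 : 4 ^ m < m * C := Nat.four_pow_lt_mul_centralBinom m hm
  calc (2 * m + 1) * 4 ^ m < (2 * m + 1) * (m * C) :=
        mul_lt_mul_of_pos_left h5 (by positivity)
    _ = m * (2 * m + 1) * C := by ring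
    _ ≤ L := h4

theorem two_pow_lt_lcm (n : ℕ) (hn : 9 ≤ n) :
    2 ^ n < (Finset.Icc 1 n).lcm id := by
  -- write n = 2m+1 or 2m+2 with m ≥ 4
  set m := (n - 1) / 2 with hm
  have hm4 : 4 ≤ m := by omega
  have hn2 : n ≤ 2 * m + 2 := by omega
  have hsub : 2 * m + 1 ≤ n := by omega
  have key := nair_bound m hm4
  have hmono : (Finset.Icc 1 (2 * m + 1)).lcm id ∣ (Finset.Icc 1 n).lcm id :=
    Finset.lcm_mono (Finset.Icc_subset_Icc le_rfl hsub)
  have hLpos : 0 < (Finset.Icc 1 n).lcm id := Nat.pos_of_ne_zero (lcm_Icc_ne_zero _)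
  have hle : (Finset.Icc 1 (2 * m + 1)).lcm id ≤ (Finset.Icc 1 n).lcm id :=
    Nat.le_of_dvd hLpos hmono
  have hpow : 2 ^ n ≤ 2 ^ (2 * m + 2) := Nat.pow_le_pow_right (by norm_num) hn2
  have h44 : 2 ^ (2 * m + 2) = 4 * 4 ^ m := by
    rw [show (4 : ℕ) = 2 ^ 2 by norm_num, ← pow_mul]
    ring
  have : 2 ^ n ≤ (2 * m + 1) * 4 ^ m := by
    calc 2 ^ n ≤ 2 ^ (2 * m + 2) := hpow
      _ = 4 * 4 ^ m := h44
      _ ≤ (2 * m + 1) * 4 ^ m := Nat.mul_le_mul_right _ (by omega)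
  omega
end

section
/- If r is a positive integer with r > 2^8 = 256, then there exists a positive integer d with d ≤ ⌈log₂ r⌉ such that d does not divide r. -/
open Nat Finset

/-- Kummer-type bound: `ν_p(C(n,k)) + ν_p(k) ≤ log_p n`. -/
private theorem key_emult {p n k : ℕ} (hp : p.Prime) (hk0 : k ≠ 0) (hkn : k ≤ n) :
    emultiplicity p (n.choose k) + emultiplicity p k ≤ (Nat.log p n : ℕ∞) := by
  have hdisj :
      Disjoint {i ∈ Ico 1 (Nat.log p n).succ | p ^ i ≤ k % p ^ i + (n - k) % p ^ i}
        {i ∈ Ico 1 (Nat.log p n).succ | p ^ i ∣ k} := by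
    simp +contextual [Finset.disjoint_right, *, Nat.dvd_iff_mod_eq_zero,
      Nat.mod_lt _ (pow_pos hp.pos _)]
  rw [Nat.Prime.emultiplicity_choose hp hkn (Nat.lt_succ_self _),
    Nat.emultiplicity_eq_card_pow_dvd hp.ne_one hk0.bot_lt
      (Nat.lt_succ_of_le (Nat.log_mono_right hkn)),
    ← Nat.cast_add]
  apply WithTop.coe_mono
  rw [← Finset.card_union_of_disjoint hdisj, Finset.filter_union_right]
  have hcard := (Ico 1 (Nat.log p n).succ).card_filter_le
    fun x => p ^ x ≤ k % p ^ x + (n - k) % p ^ x ∨ p ^ x ∣ k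
  rwa [Nat.card_Ico, Nat.succ_sub_one] at hcard

private theorem key_dvd {r n k : ℕ} (hr : r ≠ 0) (hk0 : 0 < k) (hkn : k ≤ n)
    (H : ∀ d, 0 < d → d ≤ n → d ∣ r) : k * n.choose k ∣ r := by
  have hn0 : 0 < n := hk0.trans_le hkn
  have hc0 : 0 < n.choose k := Nat.choose_pos hkn
  have hkc : k * n.choose k ≠ 0 := by positivity
  rw [← Nat.factorization_le_iff_dvd hkc hr]
  rw [Finsupp.le_def]
  intro p
  by_cases hp : p.Prime
  · set a := (k * n.choose k).factorization p with ha
    have hfa : a ≤ Nat.log p n := by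
      have h1 : emultiplicity p (n.choose k) + emultiplicity p k ≤ (Nat.log p n : ℕ∞) :=
        key_emult hp hk0.ne' hkn
      have fc : FiniteMultiplicity p (n.choose k) :=
        Nat.finiteMultiplicity_iff.2 ⟨hp.ne_one, hc0⟩
      have fk : FiniteMultiplicity p k :=
        Nat.finiteMultiplicity_iff.2 ⟨hp.ne_one, hk0⟩
      rw [fc.emultiplicity_eq_multiplicity, fk.emultiplicity_eq_multiplicity,
        Nat.multiplicity_eq_factorization hp hc0.ne',
        Nat.multiplicity_eq_factorization hp hk0.ne', ← Nat.cast_add] at h1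
      have h2 : a = (n.choose k).factorization p + k.factorization p := by
        rw [ha, Nat.factorization_mul hk0.ne' hc0.ne']
        simp [add_comm]
      rw [h2]
      exact_mod_cast h1
    have hpa : p ^ a ≤ n := (Nat.pow_le_pow_right hp.pos hfa).trans
      (Nat.pow_log_le_self p hn0.ne')
    have hdvd : p ^ a ∣ r := H _ (pow_pos hp.pos _) hpa
    exact (Nat.Prime.pow_dvd_iff_le_factorization hp hr).mp hdvd
  · simp [Nat.factorization_eq_zero_of_not_prime _ hp]

theorem exists_small_nondivisor (r : ℕ) (hr : 2 ^ 8 < r) :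
    ∃ d : ℕ, 0 < d ∧ d ≤ Nat.clog 2 r ∧ ¬ d ∣ r := by
  by_contra h
  push_neg at h
  set n := Nat.clog 2 r with hn
  have H : ∀ d, 0 < d → d ≤ n → d ∣ r := h
  have hr0 : r ≠ 0 := by omega
  have h9 : 9 ≤ n := by
    have := (Nat.lt_clog_iff_pow_lt one_lt_two).mpr hr
    omega
  have hle : r ≤ 2 ^ n := Nat.le_pow_clog one_lt_two r
  rcases Nat.even_or_odd n with ⟨m, hm⟩ | ⟨m, hm⟩
  · have hm4 : 4 ≤ m := by omega
    have hdvd : m * n.choose m ∣ r := key_dvd hr0 (by omega) (by omega) H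
    have hlt : 4 ^ m < m * n.choose m := by
      have := Nat.four_pow_lt_mul_centralBinom m hm4
      rwa [Nat.centralBinom, show 2 * m = n by omega] at this
    have hge := Nat.le_of_dvd (by omega) hdvd
    have h2 : 2 ^ n = 4 ^ m := by
      rw [show n = 2 * m by omega, pow_mul]; norm_num
    omega
  · have hm4 : 4 ≤ m := by omega
    have hdvd : (m + 1) * n.choose (m + 1) ∣ r := key_dvd hr0 (by omega) (by omega) H
    have hid : (m + 1) * n.choose (m + 1) = (2 * m + 1) * Nat.centralBinom m := by
      have h1 := Nat.add_one_mul_choose_eq (2 * m) m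
      rw [show n = 2 * m + 1 from by omega, Nat.centralBinom]
      simpa [Nat.succ_eq_add_one, mul_comm] using h1.symm
    have hC := Nat.four_pow_lt_mul_centralBinom m hm4
    have hCpos := Nat.centralBinom_pos m
    have hge := Nat.le_of_dvd (by omega) hdvd
    rw [hid] at hge
    have h2 : 2 ^ n = 2 * 4 ^ m := by
      rw [show n = 2 * m + 1 from by omega, pow_succ, pow_mul]; ring_nf
    nlinarith [hC, hCpos, hge, hle, h2]
end

section
/- For j ≥ 1, define the rational number α_j = Σ_{i=0}^{j} 3^(2^i) / 3^(2^j). Then the sequence (α_j) is strictly decreasing for j ≥ 1, i.e., α_{j+1} < α_j for all j ≥ 1. -/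
theorem alpha_strict_anti (j : ℕ) (hj : 1 ≤ j) :
    (∑ i ∈ Finset.range (j + 2), (3 : ℚ) ^ (2 ^ i)) / 3 ^ (2 ^ (j + 1)) <
      (∑ i ∈ Finset.range (j + 1), (3 : ℚ) ^ (2 ^ i)) / 3 ^ (2 ^ j) := by
  rw [div_lt_div_iff₀ (by positivity) (by positivity)]
  rw [Finset.sum_range_succ _ (j + 1), Finset.sum_range_succ _ j]
  set x : ℚ := (3 : ℚ) ^ (2 ^ j) with hxdef
  set T : ℚ := ∑ i ∈ Finset.range j, (3 : ℚ) ^ (2 ^ i) with hT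
  have hsq : (3 : ℚ) ^ (2 ^ (j + 1)) = x ^ 2 := by
    rw [hxdef, ← pow_mul, pow_succ]
  have hx9 : (9 : ℚ) ≤ x := by
    rw [hxdef]
    calc (9 : ℚ) = 3 ^ 2 := by norm_num
    _ ≤ 3 ^ (2 ^ j) := by
        apply pow_le_pow_right₀ (by norm_num)
        calc 2 = 2 ^ 1 := rfl
        _ ≤ 2 ^ j := Nat.pow_le_pow_right (by norm_num) hj
  have hT3 : (3 : ℚ) ≤ T := by
    have h0 : (3 : ℚ) ^ (2 ^ 0) ≤ T := by
      apply Finset.single_le_sum (f := fun i => (3 : ℚ) ^ (2 ^ i))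
      · intro i _; positivity
      · simpa using Nat.lt_of_lt_of_le Nat.zero_lt_one hj
    simpa using h0
  rw [hsq]
  nlinarith [sq_nonneg x, sq_nonneg (x - 3)]
end

section
/- Let k ≥ 2, let n = 2^(2^k), and define D = ∏_{i=0}^{k-1} lcm{1, ..., 3^(2^i)}. Then D divides n!. -/
lemma two_pow_add_three_pow_le : ∀ m : ℕ, 2 ≤ m → 2 ^ m + 3 ^ m ≤ 4 ^ m := by
  intro m hm
  induction m with
  | zero => omega
  | succ n ih =>
    rcases Nat.lt_or_ge n 2 with h | h
    · interval_cases n <;> simp_all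
    · have := ih h
      have h2 : 2 ^ (n + 1) + 3 ^ (n + 1) ≤ 3 * (2 ^ n + 3 ^ n) := by
        ring_nf; nlinarith [pow_pos (show (0:ℕ) < 2 by norm_num) n]
      calc 2 ^ (n + 1) + 3 ^ (n + 1) ≤ 3 * (2 ^ n + 3 ^ n) := h2
        _ ≤ 3 * 4 ^ n := by omega
        _ ≤ 4 ^ (n + 1) := by rw [pow_succ]; omega

lemma sum_pow_le (k : ℕ) (hk : 2 ≤ k) :
    (∑ i ∈ Finset.range k, 3 ^ 2 ^ i) ≤ 2 ^ 2 ^ k := by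
  induction k with
  | zero => omega
  | succ n ih =>
    rcases Nat.lt_or_ge n 2 with h | h
    · interval_cases n <;> simp [Finset.sum_range_succ]
    · have := ih h
      rw [Finset.sum_range_succ]
      have h2 : 2 ≤ 2 ^ n := by
        calc (2 : ℕ) = 2 ^ 1 := (pow_one 2).symm
          _ ≤ 2 ^ n := Nat.pow_le_pow_right (by norm_num) (by omega)
      calc (∑ i ∈ Finset.range n, 3 ^ 2 ^ i) + 3 ^ 2 ^ n
          ≤ 2 ^ 2 ^ n + 3 ^ 2 ^ n := by omega
        _ ≤ 4 ^ 2 ^ n := two_pow_add_three_pow_le _ h2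
        _ = 2 ^ 2 ^ (n + 1) := by
            rw [show (4:ℕ) = 2 ^ 2 by norm_num, ← pow_mul, pow_succ, Nat.mul_comm]

theorem prod_lcm_dvd_factorial (k : ℕ) (hk : 2 ≤ k) :
    (∏ i ∈ Finset.range k, (Finset.Icc 1 (3 ^ 2 ^ i)).lcm id) ∣ Nat.factorial (2 ^ 2 ^ k) := by
  have h1 : (∏ i ∈ Finset.range k, (Finset.Icc 1 (3 ^ 2 ^ i)).lcm id) ∣
      ∏ i ∈ Finset.range k, Nat.factorial (3 ^ 2 ^ i) := by
    refine Finset.prod_dvd_prod_of_dvd _ _ fun i _ => Finset.lcm_dvd fun b hb => ?_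
    have hb' := Finset.mem_Icc.mp hb
    exact Nat.dvd_factorial hb'.1 hb'.2
  have h2 : (∏ i ∈ Finset.range k, Nat.factorial (3 ^ 2 ^ i)) ∣
      Nat.factorial (∑ i ∈ Finset.range k, 3 ^ 2 ^ i) :=
    Nat.prod_factorial_dvd_factorial_sum _ _
  exact h1.trans (h2.trans (Nat.factorial_dvd_factorial (sum_pow_le k hk)))
end
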